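/- Let x : Fin n → ℝ be non-increasing (swap monotone) with x_i ≥ 0, and let v : Fin n → ℝ be non-increasing with v_i ≥ 0. Define p_i^min = Σ_{j=i+1}^{n} (x_{j-1} - x_j) v_j and p_i^max = Σ_{j=i}^{n} (x_j - x_{j+1}) v_j (with x_{n+1} = 0). Then the outcome (x, p^min) is envy-free, i.e., for all i, j: v_i x_i - p_i^min ≥ v_i x_j - p_j^min. -/

import Mathlib

/-- Minimum envy-free payment of agent `i` among `n` agents (0-indexed):
`p_i^min = ∑_{j=i+1}^{n-1} (x_{j-1} - x_j) v_j`. -/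
def pMin (x v : ℕ → ℝ) (n i : ℕ) : ℝ :=
  ∑ j ∈ Finset.Ico (i + 1) n, (x (j - 1) - x j) * v j

lemma telescope_aux (x : ℕ → ℝ) {a b : ℕ} (h : a ≤ b) :
    ∑ k ∈ Finset.Ico (a + 1) (b + 1), (x (k - 1) - x k) = x a - x b := by
  induction b, h using Nat.le_induction with
  | base => simp
  | succ b hb ih =>
    rw [Finset.sum_Ico_succ_top (by omega), ih]
    simp only [Nat.add_sub_cancel]
    ring

lemma mono_aux (n : ℕ) (f : ℕ → ℝ) (hf : ∀ j, j + 1 < n → f (j + 1) ≤ f j)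
    {a b : ℕ} (h : a ≤ b) (hb : b < n) : f b ≤ f a := by
  induction b, h using Nat.le_induction with
  | base => exact le_refl _
  | succ b hab ih => exact le_trans (hf b hb) (ih (by omega))

theorem min_payments_envy_free (n : ℕ) (x v : ℕ → ℝ)
    (hxmono : ∀ j, j + 1 < n → x (j + 1) ≤ x j)
    (hxpos : ∀ j, j < n → 0 ≤ x j)
    (hvmono : ∀ j, j + 1 < n → v (j + 1) ≤ v j)
    (hvpos : ∀ j, j < n → 0 ≤ v j) :
    ∀ i < n, ∀ j < n,
      v i * x i - pMin x v n i ≥ v i * x j - pMin x v n j := by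
  intro i hi j hj
  have key : ∀ a b : ℕ, a ≤ b → b < n →
      pMin x v n a - pMin x v n b = ∑ k ∈ Finset.Ico (a + 1) (b + 1),
        (x (k - 1) - x k) * v k := by
    intro a b hab hbn
    unfold pMin
    rw [← Finset.sum_Ico_consecutive _ (by omega : a + 1 ≤ b + 1) (by omega : b + 1 ≤ n)]
    ring
  have xstep : ∀ k, 0 < k → k < n → 0 ≤ x (k - 1) - x k := by
    intro k hk hkn
    have := hxmono (k - 1) (by omega)
    have heq : k - 1 + 1 = k := by omega
    rw [heq] at this
    linarith
  rcases le_or_gt i j with hij | hij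
  · -- i ≤ j : pMin i - pMin j ≤ v i * (x i - x j)
    have h1 := key i j hij hj
    have h2 : ∑ k ∈ Finset.Ico (i + 1) (j + 1), (x (k - 1) - x k) * v k ≤
        ∑ k ∈ Finset.Ico (i + 1) (j + 1), (x (k - 1) - x k) * v i := by
      apply Finset.sum_le_sum
      intro k hk
      simp only [Finset.mem_Ico] at hk
      have hkn : k < n := by omega
      exact mul_le_mul_of_nonneg_left (mono_aux n v hvmono (by omega) hkn)
        (xstep k (by omega) hkn)
    rw [← Finset.sum_mul, telescope_aux x hij] at h2
    nlinarith [h2, h1]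
  · -- j < i : pMin j - pMin i ≥ v i * (x j - x i)
    have h1 := key j i (by omega) hi
    have h2 : ∑ k ∈ Finset.Ico (j + 1) (i + 1), (x (k - 1) - x k) * v i ≤
        ∑ k ∈ Finset.Ico (j + 1) (i + 1), (x (k - 1) - x k) * v k := by
      apply Finset.sum_le_sum
      intro k hk
      simp only [Finset.mem_Ico] at hk
      have hkn : k < n := by omega
      exact mul_le_mul_of_nonneg_left (mono_aux n v hvmono (by omega) hi)
        (xstep k (by omega) hkn)
    rw [← Finset.sum_mul, telescope_aux x (le_of_lt hij)] at h2
    nlinarith [h2, h1]
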